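/- For n ≥ 1 and indeterminates c = (c_1, ..., c_{n+1}), the n×n determinant det_{1≤k,ℓ≤n}( e_{k-ℓ}(c) + (-1)^{ℓ-1} e_{k+ℓ}(c) ) equals ∏_{1≤i<j≤n+1} (1 + c_i c_j). -/

import Mathlib

open Finset

/-- Elementary symmetric polynomial of degree `r` evaluated at `x`. -/
noncomputable def epoly {σ : Type*} [Fintype σ] [DecidableEq σ] {R : Type*} [CommRing R]
    (x : σ → R) (r : ℕ) : R :=
  ∑ s ∈ Finset.univ.powersetCard r, ∏ i ∈ s, x i

/-- `epoly` with integer index, zero for negative degrees. -/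
noncomputable def epolyZ {σ : Type*} [Fintype σ] [DecidableEq σ] {R : Type*} [CommRing R]
    (x : σ → R) (k : ℤ) : R :=
  if 0 ≤ k then epoly x k.toNat else 0

section Aux
variable {R : Type*} [CommRing R]

lemma epoly_zero {σ : Type*} [Fintype σ] [DecidableEq σ] (x : σ → R) : epoly x 0 = 1 := by
  simp [epoly, Finset.powersetCard_zero]

lemma epoly_eq_zero {σ : Type*} [Fintype σ] [DecidableEq σ] (x : σ → R) {r : ℕ}
    (h : Fintype.card σ < r) : epoly x r = 0 := by
  have : (Finset.univ : Finset σ).powersetCard r = ∅ := by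
    rw [Finset.powersetCard_eq_empty]; simpa using h
  simp [epoly, this]

/-- sum over subsets of `s` of size `r` -/
noncomputable def esum {σ : Type*} [DecidableEq σ] (x : σ → R) (s : Finset σ) (r : ℕ) : R :=
  ∑ t ∈ s.powersetCard r, ∏ i ∈ t, x i

lemma epoly_eq_esum {σ : Type*} [Fintype σ] [DecidableEq σ] (x : σ → R) (r : ℕ) :
    epoly x r = esum x Finset.univ r := rfl

lemma esum_insert {σ : Type*} [DecidableEq σ] (x : σ → R) {a : σ} {s : Finset σ} (h : a ∉ s)
    (r : ℕ) : esum x (insert a s) (r + 1) = esum x s (r + 1) + x a * esum x s r := by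
  unfold esum
  rw [Finset.powersetCard_succ_insert h, Finset.sum_union, Finset.sum_image, Finset.mul_sum]
  · congr 1
    refine Finset.sum_congr rfl fun t ht => ?_
    have hts : t ⊆ s := (Finset.mem_powersetCard.mp ht).1
    rw [Finset.prod_insert (fun hc => h (hts hc))]
  · intro t ht t' ht' hee
    have hts : t ⊆ s := (Finset.mem_powersetCard.mp ht).1
    have hts' : t' ⊆ s := (Finset.mem_powersetCard.mp ht').1
    have h1 : a ∉ t := fun hc => h (hts hc)
    have h2 : a ∉ t' := fun hc => h (hts' hc)
    rw [← Finset.erase_insert h1, ← Finset.erase_insert h2, hee]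
  · rw [Finset.disjoint_right]
    intro t ht ht'
    obtain ⟨t', ht', rfl⟩ := Finset.mem_image.mp ht
    have hts : insert a t' ⊆ s := (Finset.mem_powersetCard.mp ht').1
    exact h (hts (Finset.mem_insert_self _ _))

lemma esum_map {σ τ : Type*} [DecidableEq σ] [DecidableEq τ] (x : τ → R) (f : σ ↪ τ)
    (s : Finset σ) (r : ℕ) : esum x (s.map f) r = esum (x ∘ f) s r := by
  unfold esum
  rw [Finset.powersetCard_map, Finset.sum_map]
  refine Finset.sum_congr rfl fun t _ => ?_
  show ∏ i ∈ (Finset.mapEmbedding f) t, x i = _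
  rw [Finset.mapEmbedding_apply, Finset.prod_map]
  rfl

lemma epoly_succ {n : ℕ} (c : Fin (n + 1) → R) (r : ℕ) :
    epoly c (r + 1) = epoly (c ∘ Fin.castSucc) (r + 1)
      + c (Fin.last n) * epoly (c ∘ Fin.castSucc) r := by
  have hmem : Fin.last n ∉ (Finset.univ : Finset (Fin n)).map Fin.castSuccEmb := by
    simp only [Finset.mem_map, Fin.coe_castSuccEmb]
    rintro ⟨i, -, hi⟩
    exact absurd hi (Fin.castSucc_lt_last i).ne
  rw [epoly_eq_esum, Fin.univ_castSuccEmb, Finset.cons_eq_insert, esum_insert _ hmem,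
    esum_map, esum_map]
  rfl

lemma epolyZ_rec {n : ℕ} (c : Fin (n + 1) → R) (m : ℤ) :
    epolyZ c m = epolyZ (c ∘ Fin.castSucc) m
      + c (Fin.last n) * epolyZ (c ∘ Fin.castSucc) (m - 1) := by
  rcases lt_trichotomy m 0 with hm | rfl | hm
  · rw [epolyZ, epolyZ, epolyZ, if_neg (by omega), if_neg (by omega), if_neg (by omega)]
    ring
  · rw [epolyZ, epolyZ, epolyZ, if_pos le_rfl, if_pos le_rfl, if_neg (by omega)]
    simp [epoly_zero]
  · obtain ⟨r, rfl⟩ : ∃ r : ℕ, m = (r : ℤ) + 1 := ⟨(m - 1).toNat, by omega⟩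
    rw [epolyZ, epolyZ, epolyZ, if_pos (by omega), if_pos (by omega), if_pos (by omega)]
    have h1 : ((r : ℤ) + 1).toNat = r + 1 := by omega
    have h2 : ((r : ℤ) + 1 - 1).toNat = r := by omega
    rw [h1, h2, epoly_succ]

lemma prod_one_add_eq_sum_epoly {N : ℕ} (x : Fin N → R) (γ : R) :
    ∏ i : Fin N, (1 + x i * γ) = ∑ k ∈ Finset.range (N + 1), epoly x k * γ ^ k := by
  have h : ∀ i : Fin N, (1 : R) + x i * γ = x i * γ + 1 := fun i => by ring
  simp_rw [h]
  rw [Finset.prod_add]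
  simp only [Finset.prod_const_one, mul_one]
  rw [Finset.sum_powerset]
  rw [Finset.card_univ, Fintype.card_fin]
  refine Finset.sum_congr rfl fun k _ => ?_
  rw [epoly, Finset.sum_mul]
  refine Finset.sum_congr rfl fun t ht => ?_
  have hc : t.card = k := (Finset.mem_powersetCard.mp ht).2
  rw [Finset.prod_mul_distrib, Finset.prod_const, hc]

lemma key_sum {N : ℕ} (x : Fin N → R) (l : Fin N) :
    ∑ j : Fin N, ((-1 : R) ^ (j : ℕ) * epoly x ((j : ℕ) + 1)) *
        (epolyZ x ((j : ℤ) - (l : ℕ)) + (-1 : R) ^ (l : ℕ) * epoly x ((j : ℕ) + (l : ℕ) + 2))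
      = (-1 : R) ^ (l : ℕ) * epoly x ((l : ℕ) + 1) := by
  set L : ℕ := (l : ℕ) with hLdef
  have hL : L < N := l.isLt
  set G : ℕ → R := fun i => (-1 : R) ^ i * (epoly x i * epoly x (L + i + 1)) with hG
  set T : R := ∑ i ∈ Finset.range (N + 1), G i with hT
  have hsum : (∑ j : Fin N, ((-1 : R) ^ (j : ℕ) * epoly x ((j : ℕ) + 1)) *
        (epolyZ x ((j : ℤ) - (L : ℕ)) + (-1 : R) ^ L * epoly x ((j : ℕ) + L + 2)))
      = ∑ j ∈ Finset.range N, ((-1 : R) ^ j * epoly x (j + 1)) *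
        (epolyZ x ((j : ℤ) - (L : ℕ)) + (-1 : R) ^ L * epoly x (j + L + 2)) := by
    rw [Fin.sum_univ_eq_sum_range (fun j : ℕ => ((-1 : R) ^ j * epoly x (j + 1)) *
        (epolyZ x ((j : ℤ) - (L : ℕ)) + (-1 : R) ^ L * epoly x (j + L + 2))) N]
  rw [hsum]
  have split : ∀ j ∈ Finset.range N,
      ((-1 : R) ^ j * epoly x (j + 1)) *
        (epolyZ x ((j : ℤ) - (L : ℕ)) + (-1 : R) ^ L * epoly x (j + L + 2))
      = ((-1 : R) ^ j * epoly x (j + 1)) * epolyZ x ((j : ℤ) - (L : ℕ))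
        + (-((-1 : R) ^ L)) * G (j + 1) := by
    intro j _
    have : G (j + 1) = -((-1 : R) ^ j * (epoly x (j + 1) * epoly x (L + j + 2))) := by
      rw [hG]; simp [pow_succ]; ring
    rw [this]
    have hc : j + L + 2 = L + j + 2 := by omega
    rw [hc]; ring
  rw [Finset.sum_congr rfl split, Finset.sum_add_distrib]
  -- second sum
  have h2 : ∑ j ∈ Finset.range N, (-((-1 : R) ^ L)) * G (j + 1)
      = -((-1 : R) ^ L) * (T - G 0) := by
    rw [← Finset.mul_sum]
    congr 1
    rw [hT, Finset.sum_range_succ']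
    ring
  -- first sum
  have h1 : ∑ j ∈ Finset.range N, ((-1 : R) ^ j * epoly x (j + 1)) * epolyZ x ((j : ℤ) - (L : ℕ))
      = (-1 : R) ^ L * T := by
    rw [Finset.range_eq_Ico, ← Finset.sum_Ico_consecutive _ (Nat.zero_le L) (le_of_lt hL)]
    have hzero : ∑ j ∈ Finset.Ico 0 L, ((-1 : R) ^ j * epoly x (j + 1)) *
        epolyZ x ((j : ℤ) - (L : ℕ)) = 0 := by
      refine Finset.sum_eq_zero fun j hj => ?_
      have hjL : j < L := (Finset.mem_Ico.mp hj).2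
      rw [epolyZ, if_neg (by omega)]
      ring
    rw [hzero, zero_add, Finset.sum_Ico_eq_sum_range]
    have hterm : ∀ i ∈ Finset.range (N - L), ((-1 : R) ^ (L + i) * epoly x ((L + i) + 1)) *
        epolyZ x (((L + i : ℕ) : ℤ) - (L : ℕ)) = (-1 : R) ^ L * G i := by
      intro i _
      have hcast : ((L + i : ℕ) : ℤ) - (L : ℕ) = (i : ℤ) := by push_cast; ring
      rw [hcast, epolyZ, if_pos (Int.ofNat_nonneg i), Int.toNat_natCast, hG, pow_add]
      have : L + i + 1 = L + (i + 1) := by omega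
      ring_nf
    rw [Finset.sum_congr rfl hterm, ← Finset.mul_sum, hT]
    congr 1
    refine Finset.sum_subset (fun i hi => Finset.mem_range.mpr (by
      have := Finset.mem_range.mp hi; omega)) ?_
    intro i _ hi2
    have hbig : N < L + i + 1 := by
      have : ¬ i < N - L := fun h => hi2 (Finset.mem_range.mpr h)
      omega
    rw [hG]
    have : epoly x (L + i + 1) = 0 := epoly_eq_zero x (by simpa [Fintype.card_fin] using hbig)
    simp [this]
  rw [h1, h2]
  have hG0 : G 0 = epoly x (L + 1) := by
    rw [hG]; simp [epoly_zero]
  rw [hG0]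
  ring

open Matrix in
lemma det_step {n : ℕ} (c : Fin (n + 2) → R) :
    Matrix.det (Matrix.of fun k l : Fin (n + 1) =>
        epolyZ c ((k : ℤ) - (l : ℕ)) + (-1 : R) ^ (l : ℕ) * epoly c ((k : ℕ) + (l : ℕ) + 2)) =
    ((∏ i : Fin (n + 1), (1 + (c ∘ Fin.castSucc) i * c (Fin.last (n + 1)))) *
      Matrix.det (Matrix.of fun k l : Fin n =>
        epolyZ (c ∘ Fin.castSucc) ((k : ℤ) - (l : ℕ))
          + (-1 : R) ^ (l : ℕ) * epoly (c ∘ Fin.castSucc) ((k : ℕ) + (l : ℕ) + 2))) := by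
  set ch : Fin (n + 1) → R := c ∘ Fin.castSucc with hch
  set γ : R := c (Fin.last (n + 1)) with hγ
  set M : Matrix (Fin (n + 1)) (Fin (n + 1)) R := Matrix.of fun k l =>
    epolyZ c ((k : ℤ) - (l : ℕ)) + (-1 : R) ^ (l : ℕ) * epoly c ((k : ℕ) + (l : ℕ) + 2) with hM
  set P : Matrix (Fin (n + 1)) (Fin (n + 1)) R := Matrix.of fun k l =>
    epolyZ ch ((k : ℤ) - (l : ℕ)) + (-1 : R) ^ (l : ℕ) * epoly ch ((k : ℕ) + (l : ℕ) + 2) with hP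
  set B : Matrix (Fin (n + 1)) (Fin (n + 1)) R := Matrix.of fun k j =>
    if (j : ℕ) + 1 = (k : ℕ) then γ else 0 with hB
  set u : Fin (n + 1) → R := fun k => γ * (-γ) ^ (k : ℕ) with hu
  set v : Fin (n + 1) → R := fun l => (-1 : R) ^ (l : ℕ) * epoly ch ((l : ℕ) + 1) with hv
  set CR : Matrix (Fin (n + 1)) (Fin (n + 1)) R := replicateCol (Fin 1) u * replicateRow (Fin 1) v with hCR
  have hrowv : replicateRow (Fin 1) v * P = replicateRow (Fin 1) v := by
    ext a l
    rw [Matrix.mul_apply, Matrix.replicateRow_apply]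
    simpa [Matrix.replicateRow_apply, hv, hP, Matrix.of_apply] using key_sum ch l
  have hCRapp : ∀ k l, CR k l = u k * v l := by
    intro k l
    rw [hCR, Matrix.mul_apply]
    simp [Matrix.replicateCol_apply, Matrix.replicateRow_apply]
  -- entrywise factorization
  have hfact : M = (1 + B) * (P + CR) := by
    ext k l
    rw [Matrix.add_mul, Matrix.one_mul, Matrix.add_apply]
    induction k using Fin.cases with
    | zero =>
      have hBzero : (B * (P + CR)) 0 l = 0 := by
        rw [Matrix.mul_apply]
        refine Finset.sum_eq_zero fun j _ => ?_
        rw [hB, Matrix.of_apply, if_neg (by simp), zero_mul]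
      rw [hBzero, add_zero, Matrix.add_apply, hCRapp]
      have h1 : epolyZ c (((0 : Fin (n+1)) : ℤ) - (l : ℕ)) =
          epolyZ ch (((0 : Fin (n+1)) : ℤ) - (l : ℕ))
          + γ * epolyZ ch (((0 : Fin (n+1)) : ℤ) - (l : ℕ) - 1) := epolyZ_rec c _
      have h2 : epoly c (((0 : Fin (n+1)) : ℕ) + (l : ℕ) + 2) =
          epoly ch (((0 : Fin (n+1)) : ℕ) + (l : ℕ) + 2)
          + γ * epoly ch (((0 : Fin (n+1)) : ℕ) + (l : ℕ) + 1) := epoly_succ c _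
      have h3 : epolyZ ch (((0 : Fin (n+1)) : ℤ) - (l : ℕ) - 1) = 0 := by
        rw [epolyZ, if_neg (by rw [show (((0 : Fin (n+1))) : ℤ) = (0 : ℤ) from rfl]; omega)]
      have hu0 : u 0 = γ := by
        show γ * (-γ) ^ (((0 : Fin (n+1))) : ℕ) = γ
        rw [show (((0 : Fin (n+1))) : ℕ) = 0 from rfl, pow_zero, mul_one]
      have h6 : (((0 : Fin (n+1))) : ℕ) + (l : ℕ) + 1 = (l : ℕ) + 1 := by
        rw [show (((0 : Fin (n+1))) : ℕ) = 0 from rfl]; omega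
      rw [hM, hP, Matrix.of_apply, Matrix.of_apply, h1, h2, h3, hu0, hv, h6]
      ring
    | succ k0 =>
      have hBapp : (B * (P + CR)) k0.succ l = γ * (P + CR) k0.castSucc l := by
        rw [Matrix.mul_apply]
        rw [Finset.sum_eq_single k0.castSucc]
        · rw [hB, Matrix.of_apply, if_pos (show ((Fin.castSucc k0 : Fin (n+1)) : ℕ) + 1 = ((Fin.succ k0 : Fin (n+1)) : ℕ) from rfl)]
        · intro j _ hj
          rw [hB, Matrix.of_apply, if_neg, zero_mul]
          intro hc
          exact hj (Fin.ext (by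
            rw [show (Fin.castSucc k0 : ℕ) = (k0 : ℕ) from rfl]
            have : (Fin.succ k0 : ℕ) = (k0 : ℕ) + 1 := rfl
            omega))
        · intro h; exact absurd (Finset.mem_univ _) h
      rw [hBapp, Matrix.add_apply, Matrix.add_apply, hCRapp, hCRapp]
      have hucan : u k0.succ + γ * u k0.castSucc = 0 := by
        show γ * (-γ) ^ ((k0.succ : Fin (n+1)) : ℕ) + γ * (γ * (-γ) ^ ((k0.castSucc : Fin (n+1)) : ℕ)) = 0
        rw [show ((k0.succ : Fin (n+1)) : ℕ) = (k0 : ℕ) + 1 from rfl,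
          show ((k0.castSucc : Fin (n+1)) : ℕ) = (k0 : ℕ) from rfl, pow_succ]
        ring
      have h1 : epolyZ c ((k0.succ : ℤ) - (l : ℕ)) = epolyZ ch ((k0.succ : ℤ) - (l : ℕ))
          + γ * epolyZ ch ((k0.succ : ℤ) - (l : ℕ) - 1) := epolyZ_rec c _
      have h2 : epoly c ((k0.succ : ℕ) + (l : ℕ) + 2) = epoly ch ((k0.succ : ℕ) + (l : ℕ) + 2)
          + γ * epoly ch ((k0.succ : ℕ) + (l : ℕ) + 1) := epoly_succ c _
      have h4 : epolyZ ch ((k0.succ : ℤ) - (l : ℕ) - 1) =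
          epolyZ ch ((k0.castSucc : ℤ) - (l : ℕ)) := by
        congr 1
        rw [show ((k0.succ : Fin (n+1)) : ℤ) = (((k0 : ℕ) + 1 : ℕ) : ℤ) from rfl,
          show ((k0.castSucc : Fin (n+1)) : ℤ) = (((k0 : ℕ) : ℕ) : ℤ) from rfl]
        push_cast
        ring
      have h5 : (k0.succ : ℕ) + (l : ℕ) + 1 = (k0.castSucc : ℕ) + (l : ℕ) + 2 := by
        rw [show ((k0.succ : Fin (n+1)) : ℕ) = (k0 : ℕ) + 1 from rfl,
          show ((k0.castSucc : Fin (n+1)) : ℕ) = (k0 : ℕ) from rfl]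
        omega
      rw [hM, hP, Matrix.of_apply, Matrix.of_apply, Matrix.of_apply, h1, h2, h4, h5]
      linear_combination (-(v l)) * hucan
  -- determinant of 1 + B
  have hdetB : (1 + B).det = 1 := by
    have htri : (1 + B).BlockTriangular OrderDual.toDual := by
      intro i j hij
      have hij' : (i : Fin (n+1)) < j := hij
      rw [Matrix.add_apply, Matrix.one_apply_ne (ne_of_lt hij'), hB, Matrix.of_apply,
        if_neg (by have := Fin.lt_iff_val_lt_val.mp hij'; omega), add_zero]
    rw [Matrix.det_of_lowerTriangular _ htri]
    refine Finset.prod_eq_one fun i _ => ?_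
    rw [Matrix.add_apply, Matrix.one_apply_eq, hB, Matrix.of_apply, if_neg (by omega), add_zero]
  -- determinant of 1 + CR
  have hdetQ : (1 + CR).det = ∏ i : Fin (n + 1), (1 + ch i * γ) := by
    rw [hCR]
    erw [Matrix.det_one_add_replicateCol_mul_replicateRow (ι := Fin 1)]
    rw [prod_one_add_eq_sum_epoly ch γ]
    rw [dotProduct]
    have hpt : ∀ i : Fin (n + 1), v i * u i = epoly ch ((i : ℕ) + 1) * γ ^ ((i : ℕ) + 1) := by
      intro i
      rw [hv, hu]
      have hmp : (-1 : R) ^ (i : ℕ) * (-γ) ^ (i : ℕ) = γ ^ (i : ℕ) := by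
        rw [← mul_pow, neg_one_mul, neg_neg]
      calc (-1 : R) ^ (i : ℕ) * epoly ch ((i : ℕ) + 1) * (γ * (-γ) ^ (i : ℕ))
          = ((-1 : R) ^ (i : ℕ) * (-γ) ^ (i : ℕ)) * (epoly ch ((i : ℕ) + 1) * γ) := by ring
        _ = γ ^ (i : ℕ) * (epoly ch ((i : ℕ) + 1) * γ) := by rw [hmp]
        _ = epoly ch ((i : ℕ) + 1) * γ ^ ((i : ℕ) + 1) := by rw [pow_succ]; ring
    rw [Finset.sum_congr rfl fun i _ => hpt i]
    rw [Fin.sum_univ_eq_sum_range (fun i : ℕ => epoly ch (i + 1) * γ ^ (i + 1)) (n + 1)]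
    rw [Finset.sum_range_succ' (fun k => epoly ch k * γ ^ k) (n + 1)]
    rw [epoly_zero, pow_zero, mul_one, add_comm]
  -- the last column of P is the last standard basis vector
  have hcolP : ∀ i : Fin (n + 1), P i (Fin.last n) = if i = Fin.last n then 1 else 0 := by
    intro i
    have hz : epoly ch ((i : ℕ) + ((Fin.last n : Fin (n+1)) : ℕ) + 2) = 0 := by
      refine epoly_eq_zero ch ?_
      rw [Fintype.card_fin]
      have hl : ((Fin.last n : Fin (n+1)) : ℕ) = n := rfl
      omega
    rw [hP, Matrix.of_apply, hz, mul_zero, add_zero]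
    by_cases hi : i = Fin.last n
    · rw [if_pos hi, hi, sub_self, epolyZ, if_pos le_rfl, Int.toNat_zero, epoly_zero]
    · have hlt : (i : ℕ) < n := by
        have h1 := i.isLt
        have h2 : (i : ℕ) ≠ n := fun hc => hi (Fin.ext (by simpa using hc))
        omega
      rw [if_neg hi, epolyZ, if_neg]
      rw [show ((i : Fin (n+1)) : ℤ) = (((i : ℕ) : ℕ) : ℤ) from rfl,
        show ((Fin.last n : Fin (n+1)) : ℕ) = n from rfl]
      omega
  have hdetP : P.det = Matrix.det (Matrix.of fun k l : Fin n =>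
      epolyZ ch ((k : ℤ) - (l : ℕ)) + (-1 : R) ^ (l : ℕ) * epoly ch ((k : ℕ) + (l : ℕ) + 2)) := by
    rw [Matrix.det_succ_column P (Fin.last n)]
    rw [Finset.sum_eq_single (Fin.last n)]
    · rw [hcolP, if_pos rfl, mul_one]
      have hsign : (-1 : R) ^ (((Fin.last n : Fin (n+1)) : ℕ) + ((Fin.last n : Fin (n+1)) : ℕ)) = 1 := by
        rw [show ((Fin.last n : Fin (n+1)) : ℕ) + ((Fin.last n : Fin (n+1)) : ℕ) = 2 * n from by
          rw [show ((Fin.last n : Fin (n+1)) : ℕ) = n from rfl]; omega]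
        rw [pow_mul]; norm_num
      rw [hsign, one_mul, Fin.succAbove_last]
      congr 1
    · intro i _ hi
      rw [hcolP, if_neg hi, mul_zero, zero_mul]
    · intro h; exact absurd (Finset.mem_univ _) h
  -- assemble
  have hQP : (1 + CR) * P = P + CR := by
    rw [Matrix.add_mul, Matrix.one_mul, hCR, Matrix.mul_assoc, hrowv]
  have hfact2 : M = (1 + B) * ((1 + CR) * P) := by rw [hQP]; exact hfact
  rw [hfact2, Matrix.det_mul, Matrix.det_mul, hdetB, one_mul, hdetQ, hdetP, hch]


lemma prod_pairs_split {N : ℕ} (c : Fin (N + 1) → R) :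
    (∏ i : Fin (N + 1), ∏ j ∈ Finset.univ.filter (fun j => i < j), (1 + c i * c j)) =
      (∏ i : Fin N, ∏ j ∈ Finset.univ.filter (fun j => i < j),
          (1 + (c ∘ Fin.castSucc) i * (c ∘ Fin.castSucc) j)) *
        ∏ i : Fin N, (1 + (c ∘ Fin.castSucc) i * c (Fin.last N)) := by
  simp only [Finset.prod_filter]
  rw [Fin.prod_univ_castSucc
    (f := fun i : Fin (N + 1) => ∏ j : Fin (N + 1), if i < j then 1 + c i * c j else 1)]
  have hlast : (∏ j : Fin (N + 1), if Fin.last N < j then 1 + c (Fin.last N) * c j else 1) = 1 :=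
    Finset.prod_eq_one fun j _ => if_neg (by exact (Fin.le_last j).not_gt)
  rw [hlast, mul_one]
  have hin : ∀ i : Fin N,
      (∏ j : Fin (N + 1), if Fin.castSucc i < j then 1 + c (Fin.castSucc i) * c j else 1) =
        (∏ j : Fin N, if i < j then 1 + c (Fin.castSucc i) * c (Fin.castSucc j) else 1) *
          (1 + c (Fin.castSucc i) * c (Fin.last N)) := by
    intro i
    rw [Fin.prod_univ_castSucc
      (f := fun j : Fin (N + 1) => if Fin.castSucc i < j then 1 + c (Fin.castSucc i) * c j else 1)]
    rw [if_pos (Fin.castSucc_lt_last i)]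
    simp only [Fin.castSucc_lt_castSucc_iff]
  calc (∏ i : Fin N, ∏ j : Fin (N + 1),
          if Fin.castSucc i < j then 1 + c (Fin.castSucc i) * c j else 1)
      = ∏ i : Fin N, ((∏ j : Fin N, if i < j then 1 + c (Fin.castSucc i) * c (Fin.castSucc j)
            else 1) * (1 + c (Fin.castSucc i) * c (Fin.last N))) :=
        Finset.prod_congr rfl fun i _ => hin i
    _ = _ := by rw [Finset.prod_mul_distrib]; rfl

end Aux

/-- Lemma A.3: `det( e_{k-ℓ}(c) + (-1)^{ℓ-1} e_{k+ℓ}(c) ) = ∏_{i<j} (1 + cᵢcⱼ)`.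
Here rows/columns are `0`-indexed (`k,ℓ : Fin n` with 1-indexed values `k+1, ℓ+1`). -/
theorem det_esymm_eq_prod {R : Type*} [CommRing R] {n : ℕ} (hn : 1 ≤ n)
    (c : Fin (n + 1) → R) :
    Matrix.det (Matrix.of fun k l : Fin n =>
        epolyZ c ((k : ℤ) - (l : ℕ)) + (-1 : R) ^ (l : ℕ) * epoly c ((k : ℕ) + (l : ℕ) + 2)) =
      ∏ i : Fin (n + 1), ∏ j ∈ Finset.univ.filter (fun j => i < j), (1 + c i * c j) := by

  induction n, hn using Nat.le_induction with
  | base =>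
    rw [Matrix.det_fin_one, Matrix.of_apply]
    have h0 : epolyZ c (((0 : Fin 1) : ℤ) - ((0 : Fin 1) : ℕ)) = 1 := by
      rw [show ((0 : Fin 1) : ℤ) - (((0 : Fin 1) : ℕ) : ℤ) = 0 from rfl, epolyZ, if_pos le_rfl,
        Int.toNat_zero, epoly_zero]
    have h2 : epoly c (((0 : Fin 1) : ℕ) + ((0 : Fin 1) : ℕ) + 2) = c 0 * c 1 := by
      rw [show ((0 : Fin 1) : ℕ) + ((0 : Fin 1) : ℕ) + 2 = 2 from rfl]
      rw [epoly, show (2 : ℕ) = (Finset.univ : Finset (Fin 2)).card from by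
        rw [Finset.card_univ, Fintype.card_fin], Finset.powersetCard_self,
        Finset.sum_singleton, Fin.prod_univ_two]
    rw [h0, h2]
    have hrhs : (∏ i : Fin 2, ∏ j ∈ Finset.univ.filter (fun j => i < j), (1 + c i * c j))
        = 1 + c 0 * c 1 := by
      simp only [Finset.prod_filter]
      rw [Fin.prod_univ_two (f := fun i : Fin 2 => ∏ j : Fin 2, if i < j then 1 + c i * c j else 1)]
      rw [Fin.prod_univ_two (f := fun j : Fin 2 => if (0 : Fin 2) < j then 1 + c 0 * c j else 1)]
      rw [Fin.prod_univ_two (f := fun j : Fin 2 => if (1 : Fin 2) < j then 1 + c 1 * c j else 1)]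
      rw [if_neg (by decide), if_pos (by decide), if_neg (by decide), if_neg (by decide)]
      ring
    rw [hrhs]
    simp
  | succ n hn ih =>
    rw [det_step c, ih (c ∘ Fin.castSucc), prod_pairs_split c, mul_comm]
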